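/- Let q be an integer with q ≠ 1 and let B = BS(1,q) = ⟨a, b ∣ b a b⁻¹ = a^q⟩ be the solvable Baumslag–Solitar group. If φ : B → Q is a surjective group homomorphism onto a proper quotient Q (i.e. φ has nontrivial kernel), then the image φ(a) or the image φ(b) has finite order in Q. -/
import Mathlib

/-- Relators of the Baumslag–Solitar group BS(1,q) = ⟨a, b ∣ b a b⁻¹ = a^q⟩,
with `a = FreeGroup.of false` and `b = FreeGroup.of true`. -/
def BSrels (q : ℤ) : Set (FreeGroup Bool) :=
  {FreeGroup.of true * FreeGroup.of false * (FreeGroup.of true)⁻¹ * (FreeGroup.of false) ^ (-q)}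

/-- The Baumslag–Solitar group BS(1,q). -/
def BS (q : ℤ) : Type := PresentedGroup (BSrels q)

instance (q : ℤ) : Group (BS q) := by unfold BS; infer_instance

/-- The generator `a` of BS(1,q). -/
def BSa (q : ℤ) : BS q := PresentedGroup.of false

/-- The generator `b` of BS(1,q). -/
def BSb (q : ℤ) : BS q := PresentedGroup.of true

lemma BS_rel (q : ℤ) : BSb q * BSa q * (BSb q)⁻¹ = (BSa q) ^ q := by
  have h : (PresentedGroup.mk (BSrels q))
      (FreeGroup.of true * FreeGroup.of false * (FreeGroup.of true)⁻¹ *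
        (FreeGroup.of false) ^ (-q)) = 1 := by
    have : (FreeGroup.of true * FreeGroup.of false * (FreeGroup.of true)⁻¹ *
        (FreeGroup.of false) ^ (-q)) ∈ Subgroup.normalClosure (BSrels q) :=
      Subgroup.subset_normalClosure rfl
    exact (QuotientGroup.eq_one_iff _).mpr this
  simp only [map_mul, map_inv, map_zpow] at h
  have h' : BSb q * BSa q * (BSb q)⁻¹ * (BSa q) ^ (-q) = 1 := h
  have := mul_eq_one_iff_eq_inv.mp h'
  rw [this, ← zpow_neg, neg_neg]

lemma BS_conj_zpow (q : ℤ) (s : ℤ) :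
    BSb q * (BSa q) ^ s * (BSb q)⁻¹ = (BSa q) ^ (q * s) := by
  rw [← conj_zpow, BS_rel, ← zpow_mul]

lemma BS_conj_pow (q : ℤ) (k : ℕ) (s : ℤ) :
    (BSb q) ^ k * (BSa q) ^ s * ((BSb q) ^ k)⁻¹ = (BSa q) ^ (q ^ k * s) := by
  induction k generalizing s with
  | zero => simp
  | succ n ih =>
    have step : (BSb q) ^ (n + 1) * (BSa q) ^ s * ((BSb q) ^ (n + 1))⁻¹
        = (BSb q) ^ n * (BSb q * (BSa q) ^ s * (BSb q)⁻¹) * ((BSb q) ^ n)⁻¹ := by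
      rw [pow_succ]; group
    rw [step, BS_conj_zpow, ih]
    congr 1
    ring

/-- Normal form: every element of BS(1,q) is b^{-r} a^s b^t with r, t : ℕ. -/
lemma BS_normal_form (q : ℤ) (g : BS q) :
    ∃ (r t : ℕ) (s : ℤ), g = ((BSb q) ^ r)⁻¹ * (BSa q) ^ s * (BSb q) ^ t := by
  set a := BSa q with ha
  set b := BSb q with hb
  let H : Subgroup (BS q) :=
    { carrier := {g | ∃ (r t : ℕ) (s : ℤ), g = (b ^ r)⁻¹ * a ^ s * b ^ t}
      one_mem' := ⟨0, 0, 0, by simp⟩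
      mul_mem' := by
        rintro x y ⟨r, t, s, rfl⟩ ⟨r', t', s', rfl⟩
        rcases le_or_gt r' t with h | h
        · refine ⟨r, (t - r') + t', s + q ^ (t - r') * s', ?_⟩
          have ht : b ^ t = b ^ (t - r') * b ^ r' := by
            rw [← pow_add]; congr 1; omega
          rw [ht, zpow_add, ← BS_conj_pow q (t - r') s', ← ha, ← hb]
          group
        · refine ⟨r + (r' - t), t', q ^ (r' - t) * s + s', ?_⟩
          have hr' : b ^ r' = b ^ (r' - t) * b ^ t := by
            rw [← pow_add]; congr 1; omega
          rw [hr', zpow_add, ← BS_conj_pow q (r' - t) s, ← ha, ← hb]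
          group
      inv_mem' := by
        rintro x ⟨r, t, s, rfl⟩
        exact ⟨t, r, -s, by group⟩ }
  have : g ∈ H := by
    apply PresentedGroup.generated_by
    intro j
    cases j
    · refine ⟨0, 0, 1, ?_⟩
      simp only [pow_zero, inv_one, one_mul, mul_one, zpow_one]
      rfl
    · refine ⟨0, 1, 0, ?_⟩
      simp only [pow_zero, pow_one, inv_one, one_mul, zpow_zero, mul_one]
      rfl
  exact this

theorem stmt0 {q : ℤ} (hq : q ≠ 1) {Q : Type*} [Group Q]
    (φ : BS q →* Q) (hsurj : Function.Surjective φ) (hker : φ.ker ≠ ⊥) :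
    IsOfFinOrder (φ (BSa q)) ∨ IsOfFinOrder (φ (BSb q)) := by
  obtain ⟨⟨w, hwker⟩, hw1⟩ := Subgroup.ne_bot_iff_exists_ne_one.mp hker
  simp only [ne_eq, Subgroup.mk_eq_one] at hw1
  obtain ⟨r, t, s, rfl⟩ := BS_normal_form q w
  have hφ : (φ (BSb q) ^ r)⁻¹ * φ (BSa q) ^ s * φ (BSb q) ^ t = 1 := by
    simpa [map_mul, map_inv, map_zpow, map_pow] using hwker
  rcases eq_or_ne s 0 with rfl | hs
  · right
    have htr : t ≠ r := by
      rintro rfl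
      exact hw1 (by group)
    rw [isOfFinOrder_iff_zpow_eq_one]
    refine ⟨(t : ℤ) - r, by omega, ?_⟩
    have hbt : φ (BSb q) ^ t = φ (BSb q) ^ r := by
      have h2 := hφ
      rw [zpow_zero, mul_one] at h2
      exact (inv_mul_eq_one.mp h2).symm
    rw [zpow_sub, zpow_natCast, zpow_natCast, hbt, mul_inv_cancel]
  · left
    set x := φ (BSa q)
    set y := φ (BSb q)
    have hx : x ^ s = y ^ r * (y ^ t)⁻¹ := by
      calc x ^ s = y ^ r * ((y ^ r)⁻¹ * x ^ s * y ^ t) * (y ^ t)⁻¹ := by group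
      _ = y ^ r * (y ^ t)⁻¹ := by rw [hφ]; group
    have hconj : y * x ^ s * y⁻¹ = x ^ (q * s) := by
      have h3 := congrArg φ (BS_conj_zpow q s)
      simpa [map_mul, map_inv, map_zpow] using h3
    have hcomm : y * (y ^ r * (y ^ t)⁻¹) * y⁻¹ = y ^ r * (y ^ t)⁻¹ := by group
    have hqs : x ^ (q * s) = x ^ s := by
      rw [← hconj, hx, hcomm]
    rw [isOfFinOrder_iff_zpow_eq_one]
    refine ⟨(q - 1) * s, by
      intro hcon
      rcases mul_eq_zero.mp hcon with h | h
      · exact hq (by omega)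
      · exact hs h, ?_⟩
    rw [sub_mul, one_mul, zpow_sub, hqs, mul_inv_cancel]
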